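/- For α in Φ_{≥−1} = Φ_{>0} ∪ (−Π), the piecewise-linear map σ_i satisfies: σ_i(α) = α if α = −α_j with j ≠ i, and σ_i(α) = s_i(α) otherwise; consequently σ_i preserves the set Φ_{≥−1}. -/
import Mathlib


/-- The piecewise-linear map σᵢ on the root lattice ℤⁿ. -/
def sigmaMap (n : ℕ) (A : Matrix (Fin n) (Fin n) ℤ) (i : Fin n)
    (α : Fin n → ℤ) : Fin n → ℤ :=
  fun k => if k = i then
    -α i - ∑ j ∈ Finset.univ.erase i, A i j * max (α j) 0
  else α k

/-- The linear simple reflection sᵢ on the root lattice ℤⁿ. -/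
def sMap (n : ℕ) (A : Matrix (Fin n) (Fin n) ℤ) (i : Fin n)
    (α : Fin n → ℤ) : Fin n → ℤ :=
  fun k => if k = i then
    -α i - ∑ j ∈ Finset.univ.erase i, A i j * α j
  else α k

/-- The set of almost positive roots Φ_{≥−1} = Φ_{>0} ∪ (−Π), where `P` is the
set of (coordinate vectors of) positive roots. -/
def almostPos (n : ℕ) (P : Set (Fin n → ℤ)) : Set (Fin n → ℤ) :=
  P ∪ {x | ∃ j : Fin n, x = -Pi.single j 1}

lemma sigma_eq_s_of_nonneg (n : ℕ) (A : Matrix (Fin n) (Fin n) ℤ) (i : Fin n)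
    (α : Fin n → ℤ) (h : ∀ k, 0 ≤ α k) : sigmaMap n A i α = sMap n A i α := by
  funext k
  simp only [sigmaMap, sMap]
  split <;> [skip; rfl]
  congr 1
  exact Finset.sum_congr rfl fun j _ => by rw [max_eq_left (h j)]

lemma sigma_neg_single (n : ℕ) (A : Matrix (Fin n) (Fin n) ℤ) (i j : Fin n) :
    sigmaMap n A i (-Pi.single j 1) =
      if j = i then Pi.single i 1 else -Pi.single j 1 := by
  have hmax : ∀ l : Fin n, max ((-Pi.single j 1 : Fin n → ℤ) l) 0 = 0 := by
    intro l
    simp only [Pi.neg_apply]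
    rcases eq_or_ne l j with rfl | h
    · simp
    · simp [Pi.single_eq_of_ne h]
  funext k
  simp only [sigmaMap]
  rcases eq_or_ne k i with rfl | hk
  · rw [if_pos rfl,
      Finset.sum_congr rfl (fun l _ => by rw [hmax, mul_zero] : ∀ l ∈ Finset.univ.erase k,
        A k l * max ((-Pi.single j 1 : Fin n → ℤ) l) 0 = 0),
      Finset.sum_const_zero, sub_zero]
    rcases eq_or_ne j k with rfl | hj
    · simp
    · rw [if_neg hj]
      simp [Pi.single_eq_of_ne (Ne.symm hj)]
  · rw [if_neg hk]
    rcases eq_or_ne j i with rfl | hj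
    · rw [if_pos rfl]
      simp [Pi.single_eq_of_ne hk]
    · rw [if_neg hj]

lemma s_neg_single_self (n : ℕ) (A : Matrix (Fin n) (Fin n) ℤ) (i : Fin n) :
    sMap n A i (-Pi.single i 1) = Pi.single i 1 := by
  funext k
  simp only [sMap]
  rcases eq_or_ne k i with rfl | hk
  · rw [if_pos rfl]
    have : ∀ l ∈ Finset.univ.erase k, A k l * (-Pi.single k 1 : Fin n → ℤ) l = 0 := by
      intro l hl
      have := Finset.ne_of_mem_erase hl
      simp [Pi.single_eq_of_ne this]
    rw [Finset.sum_congr rfl this]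
    simp
  · rw [if_neg hk]
    simp [Pi.single_eq_of_ne hk]

theorem stmt5 (n : ℕ) (A : Matrix (Fin n) (Fin n) ℤ)
    (hdiag : ∀ i, A i i = 2) (hoff : ∀ i j, i ≠ j → A i j ≤ 0)
    (P : Set (Fin n → ℤ))
    -- positive roots have nonnegative coordinates
    (hpos : ∀ α ∈ P, ∀ k, 0 ≤ α k)
    -- simple roots are positive roots
    (hsimple : ∀ j : Fin n, (Pi.single j 1 : Fin n → ℤ) ∈ P)
    -- sᵢ permutes the positive roots other than αᵢ, and sᵢ(αᵢ) = −αᵢ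
    (hrefl : ∀ i : Fin n, ∀ α ∈ P, α ≠ Pi.single i 1 → sMap n A i α ∈ P)
    (i : Fin n) :
    (∀ α ∈ almostPos n P, (∃ j : Fin n, j ≠ i ∧ α = -Pi.single j 1) →
        sigmaMap n A i α = α) ∧
    (∀ α ∈ almostPos n P, (¬ ∃ j : Fin n, j ≠ i ∧ α = -Pi.single j 1) →
        sigmaMap n A i α = sMap n A i α) ∧
    (∀ α ∈ almostPos n P, sigmaMap n A i α ∈ almostPos n P) := by
  refine ⟨?_, ?_, ?_⟩
  · rintro α _ ⟨j, hj, rfl⟩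
    rw [sigma_neg_single, if_neg hj]
  · rintro α hα hne
    rcases hα with hP | ⟨j, rfl⟩
    · exact sigma_eq_s_of_nonneg n A i α (hpos α hP)
    · have hj : j = i := by
        by_contra h
        exact hne ⟨j, h, rfl⟩
      subst hj
      rw [sigma_neg_single, if_pos rfl, s_neg_single_self]
  · rintro α (hP | ⟨j, rfl⟩)
    · rcases eq_or_ne α (Pi.single i 1) with rfl | hne
      · have : sigmaMap n A i (Pi.single i 1 : Fin n → ℤ) = -Pi.single i 1 := by
          funext k
          simp only [sigmaMap]
          rcases eq_or_ne k i with rfl | hk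
          · rw [if_pos rfl, Pi.single_eq_same]
            have : ∀ l ∈ Finset.univ.erase k,
                A k l * max ((Pi.single k 1 : Fin n → ℤ) l) 0 = 0 := by
              intro l hl
              have := Finset.ne_of_mem_erase hl
              simp [Pi.single_eq_of_ne this]
            rw [Finset.sum_congr rfl this]
            simp
          · rw [if_neg hk]
            simp [Pi.single_eq_of_ne hk]
        rw [this]
        exact Or.inr ⟨i, rfl⟩
      · rw [sigma_eq_s_of_nonneg n A i α (hpos α hP)]
        exact Or.inl (hrefl i α hP hne)
    · rw [sigma_neg_single]
      rcases eq_or_ne j i with rfl | hj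
      · rw [if_pos rfl]; exact Or.inl (hsimple j)
      · rw [if_neg hj]; exact Or.inr ⟨j, rfl⟩
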